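/- The map γ ↦ x_γ := Π_{i=1}^n x_{σ(i)}^{f_i(γ)} from Γ(r,p,n) to monomials in C[x_1,...,x_n] is injective, and the total degree of x_γ equals fmaj(γ). -/
import Mathlib


open Finset

namespace ColoredPerm

/-- An element of the wreath product `G(r,n) = ℤ_r ≀ S_n`: a color vector and a permutation. -/
abbrev CPerm (r n : ℕ) := (Fin n → Fin r) × Equiv.Perm (Fin n)

variable {r n : ℕ}

/-- Descent at the (0-indexed) position `j`, i.e. the paper's descent at position `j+1`:
`γ_{j+1} ≻ γ_{j+2}` in the order where higher colors are smaller, ties by the values. -/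
def isDesc (g : CPerm r n) (j : ℕ) : Prop :=
  ∃ h : j + 1 < n,
    (g.1 ⟨j, Nat.lt_of_succ_lt h⟩ < g.1 ⟨j + 1, h⟩) ∨
      (g.1 ⟨j, Nat.lt_of_succ_lt h⟩ = g.1 ⟨j + 1, h⟩ ∧
        g.2 ⟨j + 1, h⟩ < g.2 ⟨j, Nat.lt_of_succ_lt h⟩)

instance (g : CPerm r n) (j : ℕ) : Decidable (isDesc g j) := by
  unfold isDesc; exact exists_prop_decidable _

/-- The descent set (0-indexed positions). -/
def Des (g : CPerm r n) : Finset ℕ := (Finset.range n).filter (isDesc g)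

def des (g : CPerm r n) : ℕ := (Des g).card

/-- The major index: sum of the (1-indexed) descent positions. -/
def maj (g : CPerm r n) : ℕ := ∑ j ∈ Des g, (j + 1)

/-- The color weight. -/
def col (g : CPerm r n) : ℕ := ∑ i, (g.1 i : ℕ)

/-- The flag major index. -/
def fmaj (g : CPerm r n) : ℕ := r * maj g + col g

/-- `dstat g i` is the paper's `d_i(g)`: the number of (1-indexed) descents `≥ i`. -/
def dstat (g : CPerm r n) (i : ℕ) : ℕ := ((Des g).filter fun j => i ≤ j + 1).card

/-- `fstat g i` is the paper's `f_{i+1}(g) = r·d_{i+1}(g) + c_{i+1}(g)` (0-indexed `i`). -/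
def fstat (g : CPerm r n) (i : Fin n) : ℕ := r * dstat g ((i : ℕ) + 1) + (g.1 i : ℕ)

/-- The flag descent number `fdes = r·des + c_1`. -/
def fdes (g : CPerm r n) (hn : 0 < n) : ℕ := r * des g + (g.1 ⟨0, hn⟩ : ℕ)

/-- `Γ(r,p,n)`: colored permutations whose last color is `< d = r/p`. -/
def Gamma (r p n : ℕ) (hn : 0 < n) : Finset (CPerm r n) :=
  Finset.univ.filter fun g => (g.1 ⟨n - 1, Nat.sub_lt hn one_pos⟩ : ℕ) < r / p

/-- `G(r,p,n)` as the set of colored permutations with color weight `≡ 0 (mod p)`. -/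
def Hfin (r p n : ℕ) : Finset (CPerm r n) :=
  Finset.univ.filter fun g => (∑ i, (g.1 i : ℕ)) % p = 0

end ColoredPerm

namespace ColoredPerm

/-- The colored-descent basis monomial `x_γ = Π_i x_{σ(i)}^{f_i(γ)}`. -/
noncomputable def xmon {r n : ℕ} (γ : CPerm r n) : MvPolynomial (Fin n) ℂ :=
  ∏ i : Fin n, MvPolynomial.X (γ.2 i) ^ fstat γ i

end ColoredPerm

namespace ColoredPerm

variable {r n : ℕ}

lemma mem_Des {γ : CPerm r n} {j : ℕ} : j ∈ Des γ ↔ isDesc γ j := by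
  constructor
  · exact fun h => (Finset.mem_filter.1 h).2
  · intro h
    obtain ⟨h1, h2⟩ := h
    exact Finset.mem_filter.2 ⟨Finset.mem_range.2 (by omega), ⟨h1, h2⟩⟩

lemma dstat_step (γ : CPerm r n) (i : ℕ) :
    dstat γ (i + 1) = dstat γ (i + 1 + 1) + (if isDesc γ i then 1 else 0) := by
  classical
  unfold dstat
  have hsplit : (Des γ).filter (fun j => i + 1 ≤ j + 1)
      = (Des γ).filter (fun j => i + 1 + 1 ≤ j + 1) ∪ (Des γ).filter (fun j => j = i) := by
    ext j
    by_cases hj : j ∈ Des γ <;> simp [Finset.mem_filter, Finset.mem_union, hj] <;> omega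
  have hdisj : Disjoint ((Des γ).filter (fun j => i + 1 + 1 ≤ j + 1))
      ((Des γ).filter (fun j => j = i)) := by
    rw [Finset.disjoint_left]
    intro a ha hb
    have h1 := (Finset.mem_filter.1 ha).2
    have h2 := (Finset.mem_filter.1 hb).2
    omega
  rw [hsplit, Finset.card_union_of_disjoint hdisj]
  congr 1
  rw [Finset.filter_eq']
  by_cases hd : isDesc γ i
  · rw [if_pos (mem_Des.2 hd), if_pos hd]; simp
  · rw [if_neg (fun h => hd (mem_Des.1 h)), if_neg hd]; simp

lemma key_adj (hr : 0 < r) (γ : CPerm r n) (i : ℕ) (h : i + 1 < n) :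
    fstat γ ⟨i + 1, h⟩ < fstat γ ⟨i, Nat.lt_of_succ_lt h⟩ ∨
      (fstat γ ⟨i + 1, h⟩ = fstat γ ⟨i, Nat.lt_of_succ_lt h⟩ ∧
        γ.2 ⟨i, Nat.lt_of_succ_lt h⟩ < γ.2 ⟨i + 1, h⟩) := by
  have hc2 : (γ.1 ⟨i + 1, h⟩ : ℕ) < r := (γ.1 ⟨i + 1, h⟩).2
  have hstep := dstat_step γ i
  have hmul : r * (dstat γ (i + 1 + 1) + 1) = r * dstat γ (i + 1 + 1) + r := by ring
  by_cases hd : isDesc γ i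
  · left
    unfold fstat
    simp only [hstep, if_pos hd]
    omega
  · have hnd : ¬((γ.1 ⟨i, Nat.lt_of_succ_lt h⟩ < γ.1 ⟨i + 1, h⟩) ∨
        (γ.1 ⟨i, Nat.lt_of_succ_lt h⟩ = γ.1 ⟨i + 1, h⟩ ∧
          γ.2 ⟨i + 1, h⟩ < γ.2 ⟨i, Nat.lt_of_succ_lt h⟩)) := fun hc => hd ⟨h, hc⟩
    push_neg at hnd
    obtain ⟨hc, hs⟩ := hnd
    have hcle : (γ.1 ⟨i + 1, h⟩ : ℕ) ≤ (γ.1 ⟨i, Nat.lt_of_succ_lt h⟩ : ℕ) := by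
      exact_mod_cast hc
    unfold fstat
    simp only [hstep, if_neg hd, add_zero]
    rcases eq_or_lt_of_le hcle with heq | hlt
    · right
      have hceq : γ.1 ⟨i, Nat.lt_of_succ_lt h⟩ = γ.1 ⟨i + 1, h⟩ := Fin.ext heq.symm
      have hsle := hs hceq
      have hne : γ.2 ⟨i, Nat.lt_of_succ_lt h⟩ ≠ γ.2 ⟨i + 1, h⟩ := by
        intro heq2
        have := γ.2.injective heq2
        simp only [Fin.mk.injEq] at this
        omega
      exact ⟨by omega, lt_of_le_of_ne hsle hne⟩
    · left; omega

/-- the lexicographic key -/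
def key (γ : CPerm r n) (i : Fin n) : ℕᵒᵈ ×ₗ Fin n :=
  toLex (OrderDual.toDual (fstat γ i), γ.2 i)

lemma key_strictMono (hr : 0 < r) (γ : CPerm r n) : StrictMono (key γ) := by
  rcases Nat.eq_zero_or_pos n with rfl | hn
  · intro a; exact a.elim0
  obtain ⟨m, rfl⟩ : ∃ m, n = m + 1 := ⟨n - 1, by omega⟩
  rw [Fin.strictMono_iff_lt_succ]
  intro i
  have h : (i : ℕ) + 1 < m + 1 := by omega
  have hthis := key_adj hr γ i h
  have hc : Fin.castSucc i = (⟨(i : ℕ), Nat.lt_of_succ_lt h⟩ : Fin (m + 1)) := rfl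
  have hsucc : i.succ = (⟨(i : ℕ) + 1, h⟩ : Fin (m + 1)) := rfl
  rw [hc, hsucc]
  unfold key
  rw [Prod.Lex.lt_iff]
  rcases hthis with h1 | ⟨h1, h2⟩
  · left; exact h1
  · right; exact ⟨congrArg OrderDual.toDual h1.symm, h2⟩

lemma sum_single_apply (γ : CPerm r n) (j : Fin n) :
    (∑ i, Finsupp.single (γ.2 i) (fstat γ i)) j = fstat γ (γ.2.symm j) := by
  classical
  rw [Finset.sum_apply']
  rw [Finset.sum_eq_single (γ.2.symm j)]
  · simp
  · intro b _ hb
    rw [Finsupp.single_apply, if_neg]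
    intro hbe
    exact hb (by simpa using congrArg γ.2.symm hbe)
  · simp

lemma prod_monomial {ι : Type*} (s : Finset ι) (t : ι → (Fin n →₀ ℕ)) :
    ∏ i ∈ s, MvPolynomial.monomial (t i) (1 : ℂ) = MvPolynomial.monomial (∑ i ∈ s, t i) 1 := by
  classical
  induction s using Finset.cons_induction with
  | empty => simp
  | cons a s ha ih =>
      rw [Finset.prod_cons, Finset.sum_cons, ih, MvPolynomial.monomial_mul, one_mul]

lemma xmon_eq (γ : CPerm r n) :
    xmon γ = MvPolynomial.monomial (∑ i, Finsupp.single (γ.2 i) (fstat γ i)) (1 : ℂ) := by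
  unfold xmon
  simp_rw [MvPolynomial.X_pow_eq_monomial]
  exact prod_monomial _ _

lemma sum_dstat (γ : CPerm r n) :
    ∑ i : Fin n, dstat γ ((i : ℕ) + 1) = maj γ := by
  rw [Fin.sum_univ_eq_sum_range (fun i => dstat γ (i + 1))]
  unfold dstat maj
  simp_rw [Finset.card_filter]
  rw [Finset.sum_comm]
  refine Finset.sum_congr rfl fun j hj => ?_
  obtain ⟨hjn, -⟩ := mem_Des.1 hj
  rw [← Finset.card_filter]
  have h : (Finset.range n).filter (fun i => i + 1 ≤ j + 1) = Finset.range (j + 1) := by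
    ext x
    simp only [Finset.mem_filter, Finset.mem_range]
    omega
  rw [h, Finset.card_range]

lemma sum_fstat (γ : CPerm r n) : ∑ i, fstat γ i = fmaj γ := by
  unfold fstat fmaj col
  rw [Finset.sum_add_distrib, ← Finset.mul_sum, sum_dstat]

lemma xmon_totalDegree (γ : CPerm r n) : (xmon γ).totalDegree = fmaj γ := by
  classical
  rw [xmon_eq, MvPolynomial.totalDegree_monomial _ one_ne_zero]
  rw [Finsupp.sum_fintype _ _ (fun _ => rfl)]
  simp_rw [sum_single_apply]
  rw [Equiv.sum_comp γ.2.symm (fstat γ)]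
  exact sum_fstat γ

lemma xmon_injective (hr : 0 < r) : Function.Injective (xmon (r := r) (n := n)) := by
  intro γ δ hx
  rw [xmon_eq, xmon_eq] at hx
  have hE : (∑ i, Finsupp.single (γ.2 i) (fstat γ i))
      = ∑ i, Finsupp.single (δ.2 i) (fstat δ i) :=
    MvPolynomial.monomial_left_injective (one_ne_zero) hx
  have hf : ∀ j, fstat γ (γ.2.symm j) = fstat δ (δ.2.symm j) := by
    intro j
    rw [← sum_single_apply γ j, hE, sum_single_apply δ j]
  set φ : Equiv.Perm (Fin n) := γ.2.trans δ.2.symm with hφ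
  have h1 : ∀ i, fstat δ (φ i) = fstat γ i := by
    intro i
    have := hf (γ.2 i)
    simpa [hφ] using this.symm
  have h2 : ∀ i, δ.2 (φ i) = γ.2 i := by
    intro i; simp [hφ]
  have hkey : ∀ i, key δ (φ i) = key γ i := by
    intro i; unfold key; rw [h1, h2]
  have hφmono : StrictMono ⇑φ := by
    intro a b hab
    have hlt : key δ (φ a) < key δ (φ b) := by
      rw [hkey, hkey]; exact key_strictMono hr γ hab
    exact (key_strictMono hr δ).lt_iff_lt.1 hlt
  have wf : WellFoundedLT (Fin n) := inferInstance
  have hid : ∀ i, φ i = i := by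
    intro i
    have hle : i ≤ φ i := hφmono.le_apply
    have hsymm : StrictMono ⇑φ.symm := by
      intro a b hab
      rcases lt_trichotomy (φ.symm a) (φ.symm b) with h | h | h
      · exact h
      · exact absurd (by simpa using congrArg φ h) hab.ne
      · exact absurd (by simpa using hφmono h) (not_lt.2 hab.le)
    have h2' : i ≤ φ.symm i := hsymm.le_apply
    have h3 : φ i ≤ φ (φ.symm i) := hφmono.monotone h2'
    simp only [Equiv.apply_symm_apply] at h3
    exact le_antisymm h3 hle
  have hperm : γ.2 = δ.2 := by
    apply Equiv.ext
    intro i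
    have h' : δ.2.symm (γ.2 i) = i := by simpa [hφ] using hid i
    calc γ.2 i = δ.2 (δ.2.symm (γ.2 i)) := (δ.2.apply_symm_apply _).symm
    _ = δ.2 i := by rw [h']
  have hcol : γ.1 = δ.1 := by
    funext i
    have hfe : fstat γ i = fstat δ i := by rw [← h1 i, hid i]
    have e1 : (γ.1 i : ℕ) = fstat γ i % r := by
      unfold fstat; rw [Nat.mul_add_mod]; exact (Nat.mod_eq_of_lt (γ.1 i).2).symm
    have e2 : (δ.1 i : ℕ) = fstat δ i % r := by
      unfold fstat; rw [Nat.mul_add_mod]; exact (Nat.mod_eq_of_lt (δ.1 i).2).symm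
    exact Fin.ext (by rw [e1, e2, hfe])
  exact Prod.ext hcol hperm

end ColoredPerm

open ColoredPerm in
/-- The map `γ ↦ x_γ` is injective on `Γ(r,p,n)` and the total degree of
`x_γ` equals `fmaj(γ)`. -/
theorem xmon_injOn_and_degree (r p n : ℕ) (hr : 0 < r) (hp : 0 < p) (hn : 0 < n)
    (hpr : p ∣ r) :
    Set.InjOn (xmon (r := r) (n := n)) ↑(Gamma r p n hn) ∧
      ∀ γ ∈ Gamma r p n hn, (xmon γ).totalDegree = fmaj γ := by
  exact ⟨(xmon_injective hr).injOn, fun γ _ => xmon_totalDegree γ⟩
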